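/- With notation as in the context, assume additionally that p_w = ∑_{e ∈ s⁻¹(w)} s_e s_e* for every vertex w with x_w ≠ 0 (the relative Cuntz–Krieger relation on the support of x). Then V*V = P. -/

import Mathlib

/-- The range map extended to `E¹ ⊕ E⁰` via the convention `r v = v` for vertices. -/
def rext {V E : Type*} (r : E → V) : E ⊕ V → V := Sum.elim r id

/-- The index set `S↑(x)`. -/
def SUp {V E : Type*} (s : E → V) (x : V → ℤ) : Set ((E ⊕ V) × ℤ) :=
  {q | match q.1 with
       | Sum.inl e => 1 ≤ q.2 ∧ q.2 ≤ -x (s e)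
       | Sum.inr v => 1 ≤ q.2 ∧ q.2 ≤ x v}

/-- The index set `S↓(x)`. -/
def SDn {V E : Type*} (s : E → V) (x : V → ℤ) : Set ((E ⊕ V) × ℤ) :=
  {q | match q.1 with
       | Sum.inl e => 1 ≤ q.2 ∧ q.2 ≤ x (s e)
       | Sum.inr v => 1 ≤ q.2 ∧ q.2 ≤ -x v}

/-- The element `V` of `M_h(A)` associated to a family `{p_v, s_e}` and `x`:
`V = ∑_{w, 1≤i≤x_w, s(e)=w} s_e·E_{m↑(w,i),m↓(e,i)} + ∑_{w, 1≤i≤-x_w, s(e)=w} s_e*·E_{m↑(e,i),m↓(w,i)}`,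
where the first sum is indexed by the pairs `(e,i) ∈ S↓(x)` with `e ∈ E¹` (and `w = s(e)`),
and the second by the pairs `(e,i) ∈ S↑(x)` with `e ∈ E¹` (and `w = s(e)`). -/
noncomputable def Vmat {V E A : Type*} [AddCommMonoid A] [Star A]
    (s : E → V) (x : V → ℤ) (S : E → A) {h : ℕ}
    [Fintype (SUp s x)] [Fintype (SDn s x)]
    (mup : SUp s x ≃ Fin h) (mdn : SDn s x ≃ Fin h) : Matrix (Fin h) (Fin h) A :=
  (∑ q : SDn s x, match q with
    | ⟨(Sum.inl e, i), hq⟩ =>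
        Matrix.single (mup ⟨(Sum.inr (s e), i), hq⟩) (mdn ⟨(Sum.inl e, i), hq⟩) (S e)
    | ⟨(Sum.inr _, _), _⟩ => 0)
  + (∑ q : SUp s x, match q with
    | ⟨(Sum.inl e, i), hq⟩ =>
        Matrix.single (mup ⟨(Sum.inl e, i), hq⟩) (mdn ⟨(Sum.inr (s e), i), hq⟩) (star (S e))
    | ⟨(Sum.inr _, _), _⟩ => 0)

/-- The element `P` of `M_h(A)`:
`P = ∑_{w, 1≤i≤x_w} p_w·E_{m↑(w,i),m↑(w,i)} + ∑_{w, 1≤i≤-x_w, s(e)=w} p_{r(e)}·E_{m↑(e,i),m↑(e,i)}`,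
written as a single sum over `S↑(x)` using the convention `r v = v`. -/
noncomputable def Pmat {V E A : Type*} [AddCommMonoid A]
    (r s : E → V) (x : V → ℤ) (p : V → A) {h : ℕ}
    [Fintype (SUp s x)]
    (mup : SUp s x ≃ Fin h) : Matrix (Fin h) (Fin h) A :=
  ∑ q : SUp s x, Matrix.single (mup q) (mup q) (p (rext r q.1.1))

/-! ### Auxiliary material -/

theorem star_stdBasisMatrix' {n A : Type*} [DecidableEq n] [AddMonoid A] [StarAddMonoid A]
    (i j : n) (a : A) :
    star (Matrix.single i j a) = Matrix.single j i (star a) := by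
  ext a' b'
  simp only [Matrix.star_apply, Matrix.single, Matrix.of_apply]
  rw [apply_ite (star : A → A), star_zero]
  exact if_congr (and_comm) rfl rfl

theorem stdBasisMatrix_sum' {n A : Type*} [DecidableEq n] [AddCommMonoid A] {ι : Type*}
    (t : Finset ι) (i j : n) (f : ι → A) :
    Matrix.single i j (∑ k ∈ t, f k) = ∑ k ∈ t, Matrix.single i j (f k) := by
  classical
  induction t using Finset.induction with
  | empty => simp
  | insert _ _ h ih => rw [Finset.sum_insert h, Finset.sum_insert h, Matrix.single_add, ih]

section Aux

variable {V E A : Type*} [AddCommMonoid A] [Star A]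
    (s : E → V) (x : V → ℤ) (S : E → A) {h : ℕ}
    [Fintype (SUp s x)] [Fintype (SDn s x)]
    (mup : SUp s x ≃ Fin h) (mdn : SDn s x ≃ Fin h)

/-- The `S↓`-indexed summand of `Vmat`. -/
noncomputable def Dmat (q : SDn s x) : Matrix (Fin h) (Fin h) A :=
  match q with
  | ⟨(Sum.inl e, i), hq⟩ =>
      Matrix.single (mup ⟨(Sum.inr (s e), i), hq⟩) (mdn ⟨(Sum.inl e, i), hq⟩) (S e)
  | ⟨(Sum.inr _, _), _⟩ => 0

/-- The `S↑`-indexed summand of `Vmat`. -/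
noncomputable def Umat (q : SUp s x) : Matrix (Fin h) (Fin h) A :=
  match q with
  | ⟨(Sum.inl e, i), hq⟩ =>
      Matrix.single (mup ⟨(Sum.inl e, i), hq⟩) (mdn ⟨(Sum.inr (s e), i), hq⟩) (star (S e))
  | ⟨(Sum.inr _, _), _⟩ => 0

theorem Vmat_eq :
    Vmat s x S mup mdn
      = (∑ q : SDn s x, Dmat s x S mup mdn q) + ∑ q : SUp s x, Umat s x S mup mdn q := rfl

@[simp] theorem Dmat_inl (e : E) (i : ℤ) (hq : (Sum.inl e, i) ∈ SDn s x) :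
    Dmat s x S mup mdn ⟨(Sum.inl e, i), hq⟩
      = Matrix.single (mup ⟨(Sum.inr (s e), i), hq⟩) (mdn ⟨(Sum.inl e, i), hq⟩) (S e) :=
  rfl

@[simp] theorem Dmat_inr (w : V) (i : ℤ) (hq : (Sum.inr w, i) ∈ SDn s x) :
    Dmat s x S mup mdn ⟨(Sum.inr w, i), hq⟩ = 0 := rfl

@[simp] theorem Umat_inl (e : E) (i : ℤ) (hq : (Sum.inl e, i) ∈ SUp s x) :
    Umat s x S mup mdn ⟨(Sum.inl e, i), hq⟩
      = Matrix.single (mup ⟨(Sum.inl e, i), hq⟩) (mdn ⟨(Sum.inr (s e), i), hq⟩)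
          (star (S e)) :=
  rfl

@[simp] theorem Umat_inr (w : V) (i : ℤ) (hq : (Sum.inr w, i) ∈ SUp s x) :
    Umat s x S mup mdn ⟨(Sum.inr w, i), hq⟩ = 0 := rfl

end Aux

theorem stmt12 {V E A : Type*} [Countable V] [Countable E] [NonUnitalCStarAlgebra A]
    (r s : E → V) (p : V → A) (S : E → A)
    (hp_star : ∀ v, star (p v) = p v)
    (hp_idem : ∀ v, p v * p v = p v)
    (hp_orth : ∀ v w, v ≠ w → p v * p w = 0)
    (hCK1 : ∀ e, star (S e) * S e = p (r e))
    (hS_orth : ∀ e f, e ≠ f → star (S e) * S f = 0)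
    (hCK3 : ∀ e, p (s e) * S e = S e)
    (x : V → ℤ) (hsupp : {v | x v ≠ 0}.Finite)
    (hemit : ∀ v, x v ≠ 0 → {e | s e = v}.Finite)
    (hker : ∀ v, ∑ᶠ e ∈ {e | r e = v}, x (s e) = x v)
    {h : ℕ} [Fintype (SUp s x)] [Fintype (SDn s x)]
    (mup : SUp s x ≃ Fin h) (mdn : SDn s x ≃ Fin h)
    (hcomp : ∀ (q : SUp s x) (q' : SDn s x), mup q = mdn q' → rext r q.1.1 = rext r q'.1.1)
    (hRCK : ∀ w, x w ≠ 0 → p w = ∑ᶠ e ∈ {e | s e = w}, S e * star (S e)) :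
    star (Vmat s x S mup mdn) * Vmat s x S mup mdn = Pmat r s x p mup := by
  classical
  set D := Dmat s x S mup mdn with hD
  set U := Umat s x S mup mdn with hU
  -- the two diagonal pieces, as functions on `SDn`
  set F1 : SDn s x → Matrix (Fin h) (Fin h) A := fun q =>
    match q with
    | ⟨(Sum.inl e, i), hq⟩ =>
        Matrix.single (mdn ⟨(Sum.inl e, i), hq⟩) (mdn ⟨(Sum.inl e, i), hq⟩) (p (r e))
    | ⟨(Sum.inr _, _), _⟩ => 0 with hF1
  set F2 : SDn s x → Matrix (Fin h) (Fin h) A := fun q =>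
    match q with
    | ⟨(Sum.inl _, _), _⟩ => 0
    | ⟨(Sum.inr w, i), hq⟩ =>
        Matrix.single (mdn ⟨(Sum.inr w, i), hq⟩) (mdn ⟨(Sum.inr w, i), hq⟩) (p w)
    with hF2
  -- the `S↑`-indexed diagonal pieces coming from `U* U`
  set G : SUp s x → Matrix (Fin h) (Fin h) A := fun q =>
    match q with
    | ⟨(Sum.inl e, i), hq⟩ =>
        Matrix.single (mdn ⟨(Sum.inr (s e), i), hq⟩) (mdn ⟨(Sum.inr (s e), i), hq⟩)
          (S e * star (S e))
    | ⟨(Sum.inr _, _), _⟩ => 0 with hG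
  have h11 : (∑ q : SDn s x, star (D q)) * (∑ q : SDn s x, D q) = ∑ q : SDn s x, F1 q := by
    rw [Finset.sum_mul_sum]
    refine Finset.sum_congr rfl fun q _ => ?_
    obtain ⟨⟨y, i⟩, hq⟩ := q
    cases y with
    | inr w =>
        simp only [hD, Dmat_inr, star_zero, zero_mul, Finset.sum_const_zero]
        rfl
    | inl e =>
        rw [Finset.sum_eq_single (⟨(Sum.inl e, i), hq⟩ : SDn s x)]
        · show star (D _) * D _ = _
          rw [hD, Dmat_inl, star_stdBasisMatrix', Matrix.single_mul_single_same, hCK1]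
        · intro q' _ hne
          obtain ⟨⟨y', j⟩, hq'⟩ := q'
          cases y' with
          | inr w' => rw [hD, Dmat_inr, mul_zero]
          | inl f =>
              rw [hD, Dmat_inl, Dmat_inl, star_stdBasisMatrix']
              by_cases hsf : s e = s f ∧ i = j
              · obtain ⟨h1, h2⟩ := hsf
                subst h2
                have hup : (⟨(Sum.inr (s e), i), hq⟩ : SUp s x) = ⟨(Sum.inr (s f), i), hq'⟩ :=
                  Subtype.ext (show ((Sum.inr (s e) : E ⊕ V), i) = (Sum.inr (s f), i) by rw [h1])
                rw [hup, Matrix.single_mul_single_same,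
                  hS_orth e f (fun hef => hne (Subtype.ext (show ((Sum.inl f : E ⊕ V), i) = (Sum.inl e, i) by rw [hef]))),
                  Matrix.single_zero]
              · apply Matrix.single_mul_single_of_ne
                intro hEq
                have hv := congrArg Subtype.val (mup.injective hEq)
                exact hsf ⟨Sum.inr.inj (congrArg Prod.fst hv), congrArg Prod.snd hv⟩
        · intro habs
          exact absurd (Finset.mem_univ _) habs
  have h12 : (∑ q : SDn s x, star (D q)) * (∑ q : SUp s x, U q) = 0 := by
    rw [Finset.sum_mul_sum]
    refine Finset.sum_eq_zero fun q _ => Finset.sum_eq_zero fun q' _ => ?_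
    obtain ⟨⟨y, i⟩, hq⟩ := q
    cases y with
    | inr w => rw [hD, Dmat_inr, star_zero, zero_mul]
    | inl e =>
        obtain ⟨⟨y', j⟩, hq'⟩ := q'
        cases y' with
        | inr w' => rw [hU, Umat_inr, mul_zero]
        | inl f =>
            rw [hD, Dmat_inl, hU, Umat_inl, star_stdBasisMatrix']
            apply Matrix.single_mul_single_of_ne
            intro hEq
            have hv := congrArg Subtype.val (mup.injective hEq)
            simp at hv
  have h21 : (∑ q : SUp s x, star (U q)) * (∑ q : SDn s x, D q) = 0 := by
    rw [Finset.sum_mul_sum]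
    refine Finset.sum_eq_zero fun q _ => Finset.sum_eq_zero fun q' _ => ?_
    obtain ⟨⟨y, i⟩, hq⟩ := q
    cases y with
    | inr w => rw [hU, Umat_inr, star_zero, zero_mul]
    | inl e =>
        obtain ⟨⟨y', j⟩, hq'⟩ := q'
        cases y' with
        | inr w' => rw [hD, Dmat_inr, mul_zero]
        | inl f =>
            rw [hU, Umat_inl, hD, Dmat_inl, star_stdBasisMatrix']
            apply Matrix.single_mul_single_of_ne
            intro hEq
            have hv := congrArg Subtype.val (mup.injective hEq)
            simp at hv
  have h22 : (∑ q : SUp s x, star (U q)) * (∑ q : SUp s x, U q) = ∑ q : SUp s x, G q := by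
    rw [Finset.sum_mul_sum]
    refine Finset.sum_congr rfl fun q _ => ?_
    obtain ⟨⟨y, i⟩, hq⟩ := q
    cases y with
    | inr w =>
        simp only [hU, Umat_inr, star_zero, zero_mul, Finset.sum_const_zero]
        rfl
    | inl e =>
        rw [Finset.sum_eq_single (⟨(Sum.inl e, i), hq⟩ : SUp s x)]
        · show star (U _) * U _ = _
          rw [hU, Umat_inl, star_stdBasisMatrix', star_star, Matrix.single_mul_single_same]
        · intro q' _ hne
          obtain ⟨⟨y', j⟩, hq'⟩ := q'
          cases y' with
          | inr w' => rw [hU, Umat_inr, mul_zero]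
          | inl f =>
              rw [hU, Umat_inl, Umat_inl, star_stdBasisMatrix']
              apply Matrix.single_mul_single_of_ne
              intro hEq
              exact hne ((mup.injective hEq).symm)
        · intro habs
          exact absurd (Finset.mem_univ _) habs
  -- regroup the diagonal `S↑`-sum as a diagonal `S↓`-sum via `hRCK`
  have h22' : ∑ q : SUp s x, G q = ∑ q' : SDn s x, F2 q' := by
    set φ : SUp s x → SDn s x := fun q =>
      match q with
      | ⟨(Sum.inl e, i), hq⟩ => ⟨(Sum.inr (s e), i), hq⟩
      | ⟨(Sum.inr w, i), hq⟩ => mdn.symm (mup ⟨(Sum.inr w, i), hq⟩) with hφ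
    rw [← Finset.sum_fiberwise_of_maps_to (g := φ) (t := Finset.univ)
      (fun q _ => Finset.mem_univ _) G]
    refine Finset.sum_congr rfl fun q' _ => ?_
    obtain ⟨⟨y', j⟩, hq'⟩ := q'
    cases y' with
    | inl f =>
        refine Finset.sum_eq_zero fun q hqm => ?_
        obtain ⟨⟨y, i⟩, hq⟩ := q
        cases y with
        | inr w => rfl
        | inl e =>
            exfalso
            have hmem := (Finset.mem_filter.mp hqm).2
            have hv := congrArg Subtype.val hmem
            simp [hφ] at hv
    | inr w =>
        have hj1 : 1 ≤ j := hq'.1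
        have hj2 : j ≤ -x w := hq'.2
        have hxw : x w ≠ 0 := by omega
        show _ = Matrix.single (mdn ⟨(Sum.inr w, j), hq'⟩) (mdn ⟨(Sum.inr w, j), hq'⟩)
          (p w)
        rw [hRCK w hxw, finsum_mem_eq_finite_toFinset_sum _ (hemit w hxw), stdBasisMatrix_sum']
    -- now a bijection between emitted edges and the fiber
        rw [← Finset.sum_filter_of_ne
          (p := fun q : SUp s x => (q : (E ⊕ V) × ℤ).1.isLeft = true)
          (by
            intro q hqm hGq
            obtain ⟨⟨y, i⟩, hq⟩ := q
            cases y with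
            | inl e => rfl
            | inr w'' => exact absurd rfl hGq)]
        refine (Finset.sum_bij
          (i := fun e he => (⟨(Sum.inl e, j), by
            have hsw : s e = w := (hemit w hxw).mem_toFinset.mp he
            show 1 ≤ j ∧ j ≤ -x (s e)
            rw [hsw]; exact ⟨hj1, hj2⟩⟩ : SUp s x))
          ?_ ?_ ?_ ?_).symm
        · intro e he
          simp only [Finset.mem_filter, Finset.mem_univ, true_and]
          have hsw : s e = w := (hemit w hxw).mem_toFinset.mp he
          refine ⟨Subtype.ext (show ((Sum.inr (s e) : E ⊕ V), j)
            = ((Sum.inr w : E ⊕ V), j) by rw [hsw]), rfl⟩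
        · intro e₁ h₁ e₂ h₂ hEq
          have hv := congrArg Subtype.val hEq
          simpa using congrArg Prod.fst hv
        · intro q hqm
          simp only [Finset.mem_filter, Finset.mem_univ, true_and] at hqm
          obtain ⟨hφq, hleft⟩ := hqm
          obtain ⟨⟨y, i⟩, hq⟩ := q
          cases y with
          | inr w'' => simp at hleft
          | inl e =>
              have hv : ((Sum.inr (s e) : E ⊕ V), i) = ((Sum.inr w : E ⊕ V), j) :=
                congrArg Subtype.val hφq
              have hsw : s e = w := Sum.inr.inj (congrArg Prod.fst hv)
              have hij : i = j := congrArg Prod.snd hv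
              refine ⟨e, (hemit w hxw).mem_toFinset.mpr hsw, ?_⟩
              exact Subtype.ext (show ((Sum.inl e : E ⊕ V), j)
                = ((Sum.inl e : E ⊕ V), i) by rw [hij])
        · intro e he
          have hsw : s e = w := (hemit w hxw).mem_toFinset.mp he
          exact congrArg
            (fun q'' : SDn s x =>
              Matrix.single (mdn q'') (mdn q'') (S e * star (S e)))
            (Subtype.ext (show ((Sum.inr w : E ⊕ V), j)
              = ((Sum.inr (s e) : E ⊕ V), j) by rw [hsw]))
  have hP : Pmat r s x p mup
      = ∑ q' : SDn s x, Matrix.single (mdn q') (mdn q') (p (rext r q'.1.1)) := by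
    unfold Pmat
    refine Fintype.sum_equiv (mup.trans mdn.symm) _ _ fun q => ?_
    have h1 : mdn ((mup.trans mdn.symm) q) = mup q := by simp
    have h2 := hcomp q ((mup.trans mdn.symm) q) h1.symm
    rw [h2, ← h1]
  rw [Vmat_eq, star_add, add_mul, mul_add, mul_add, star_sum, star_sum, h11, h12, h21, h22,
    h22', hP, zero_add, add_zero, ← Finset.sum_add_distrib]
  refine Finset.sum_congr rfl fun q' _ => ?_
  obtain ⟨⟨y, i⟩, hq⟩ := q'
  cases y with
  | inl e => exact add_zero _
  | inr w => exact zero_add _
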